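/- arXiv:1011.1708 — 4 statements merged into one kernel-verified Lean document; each statement's English description precedes it below -/
import Mathlib

section
/- Let p and q be two probability mass functions on a finite alphabet A such that the L1 distance ||p - q||_1 = Σ_{c∈A} |p(c) - q(c)| is at most 1/2. Then |H(p) - H(q)| ≤ -||p - q||_1 · log₂(||p - q||_1 / |A|), where H denotes the Shannon entropy H(p) = -Σ_{c∈A} p(c) log₂ p(c). -/
open Finset

noncomputable def entH {A : Type*} [Fintype A] (p : A → ℝ) : ℝ :=
  -∑ x : A, p x * Real.logb 2 (p x)

def L1 {A : Type*} [Fintype A] (p q : A → ℝ) : ℝ := ∑ x : A, |p x - q x|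

open Real in
private lemma phi_hasDeriv {b : ℝ} (hb0 : b ≠ 0) (hb1 : b ≠ 1) :
    HasDerivAt (fun b => negMulLog b - negMulLog (1 - b))
      (-log b - log (1 - b) - 2) b := by
  have h1 := Real.hasDerivAt_negMulLog hb0
  have hinner : HasDerivAt (fun x : ℝ => 1 - x) (-1) b := by
    simpa using (hasDerivAt_id b).const_sub 1
  have h1b : (1 : ℝ) - b ≠ 0 := by
    intro hc; apply hb1; linarith [sub_eq_zero.mp hc]
  have h2 : HasDerivAt (fun x : ℝ => negMulLog (1 - x))
      ((-log (1 - b) - 1) * (-1)) b :=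
    (Real.hasDerivAt_negMulLog h1b).comp b hinner
  have := h1.sub h2
  exact this.congr_deriv (by ring)

open Real in
/-- Key lemma: negMulLog (1 - d) ≤ negMulLog d for 0 ≤ d ≤ 1/2. -/
private lemma negMulLog_one_sub_le {d : ℝ} (hd0 : 0 ≤ d) (hd : d ≤ 1 / 2) :
    negMulLog (1 - d) ≤ negMulLog d := by
  set φ : ℝ → ℝ := fun b => negMulLog b - negMulLog (1 - b) with hφ
  suffices h : 0 ≤ φ d by simpa [hφ] using h
  have h2e : (2 : ℝ) < Real.exp 1 := by
    have := Real.add_one_lt_exp (x := 1) one_ne_zero; linarith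
  have hexp2 : (4 : ℝ) < Real.exp 2 := by
    have he : Real.exp 2 = Real.exp 1 * Real.exp 1 := by
      rw [← Real.exp_add]; norm_num
    nlinarith
  have hepos : 0 < Real.exp (-2) := Real.exp_pos _
  have hei : Real.exp (-2) * Real.exp 2 = 1 := by
    rw [← Real.exp_add]; norm_num
  have hs0 : 0 ≤ 1 - 4 * Real.exp (-2) := by nlinarith
  set s : ℝ := Real.sqrt (1 - 4 * Real.exp (-2)) with hs
  have hs2 : s ^ 2 = 1 - 4 * Real.exp (-2) := Real.sq_sqrt hs0
  have hsnn : 0 ≤ s := Real.sqrt_nonneg _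
  have hslt1 : s < 1 := by
    have : s < Real.sqrt 1 := Real.sqrt_lt_sqrt hs0 (by nlinarith)
    simpa using this
  set r : ℝ := (1 - s) / 2 with hr
  have hr0 : 0 < r := by rw [hr]; linarith
  have hr2 : r ≤ 1 / 2 := by rw [hr]; linarith
  have hrr : r * (1 - r) = Real.exp (-2) := by
    have : r * (1 - r) = (1 - s ^ 2) / 4 := by rw [hr]; ring
    rw [this, hs2]; ring
  have hcont : Continuous φ := by
    exact Real.continuous_negMulLog.sub
      (Real.continuous_negMulLog.comp (continuous_const.sub continuous_id))
  have hmono : StrictMonoOn φ (Set.Icc 0 r) := by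
    apply strictMonoOn_of_deriv_pos (convex_Icc 0 r) hcont.continuousOn
    intro b hb
    rw [interior_Icc] at hb
    obtain ⟨hb0, hbr⟩ := hb
    have hb1 : b < 1 := by linarith
    rw [(phi_hasDeriv hb0.ne' hb1.ne).deriv]
    have hprod : b * (1 - b) < Real.exp (-2) := by
      rw [← hrr]; nlinarith
    have hlog : Real.log (b * (1 - b)) < -2 := by
      have := Real.log_lt_log (by nlinarith) hprod
      rwa [Real.log_exp] at this
    rw [Real.log_mul hb0.ne' (by linarith)] at hlog
    linarith
  have hanti : StrictAntiOn φ (Set.Icc r (1 / 2)) := by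
    apply strictAntiOn_of_deriv_neg (convex_Icc r (1 / 2)) hcont.continuousOn
    intro b hb
    rw [interior_Icc] at hb
    obtain ⟨hbr, hb12⟩ := hb
    have hb0 : 0 < b := lt_trans hr0 hbr
    have hb1 : b < 1 := by linarith
    rw [(phi_hasDeriv hb0.ne' hb1.ne).deriv]
    have hprod : Real.exp (-2) < b * (1 - b) := by
      rw [← hrr]; nlinarith
    have hlog : -2 < Real.log (b * (1 - b)) := by
      have := Real.log_lt_log hepos hprod
      rwa [Real.log_exp] at this
    rw [Real.log_mul hb0.ne' (by linarith)] at hlog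
    linarith
  have hφ0 : φ 0 = 0 := by simp [hφ]
  have hφ12 : φ (1 / 2) = 0 := by norm_num [hφ]
  rcases le_total d r with hdr | hdr
  · rcases eq_or_lt_of_le hd0 with h0 | h0
    · rw [← h0, hφ0]
    · have := hmono ⟨le_rfl, hr0.le⟩ ⟨hd0, hdr⟩ h0
      rw [hφ0] at this; exact this.le
  · rcases eq_or_lt_of_le hd with h0 | h0
    · rw [h0, hφ12]
    · have := hanti ⟨hdr, hd⟩ ⟨hr2, le_rfl⟩ h0
      rw [hφ12] at this; exact this.le

open Real in
private lemma negMulLog_add_le {x d : ℝ} (hx : 0 ≤ x) (hd : 0 ≤ d) :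
    negMulLog (x + d) ≤ negMulLog x + negMulLog d := by
  rcases eq_or_lt_of_le hx with hx0 | hx0
  · simp [← hx0]
  rcases eq_or_lt_of_le hd with hd0 | hd0
  · simp [← hd0]
  have hxd : 0 < x + d := by linarith
  have la : Real.log x ≤ Real.log (x + d) := Real.log_le_log hx0 (by linarith)
  have lb : Real.log d ≤ Real.log (x + d) := Real.log_le_log hd0 (by linarith)
  have ha := mul_le_mul_of_nonneg_left la hx
  have hb := mul_le_mul_of_nonneg_left lb hd
  simp only [negMulLog]
  nlinarith

open Real in
private lemma negMulLog_sub_le {x d : ℝ} (hx : 0 < x) (hd : 0 < d)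
    (hxd : x + d ≤ 1) (hd2 : d ≤ 1 / 2) :
    negMulLog x ≤ negMulLog (x + d) + negMulLog d := by
  have h1d : 0 < 1 - d := by linarith
  have hX : x ≤ 1 - d := by linarith
  have key2 : negMulLog (1 - d) ≤ negMulLog d := negMulLog_one_sub_le hd.le hd2
  -- concavity of log gives x * log ((x+d)/x) ≤ negMulLog (1-d)
  have hu : (x + d) / x ∈ Set.Ioi (0 : ℝ) := by
    simp only [Set.mem_Ioi]; positivity
  have h1 : (1 : ℝ) ∈ Set.Ioi (0 : ℝ) := by norm_num
  have hl0 : 0 ≤ x / (1 - d) := by positivity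
  have hl1 : 0 ≤ 1 - x / (1 - d) := by
    rw [sub_nonneg, div_le_one h1d]; exact hX
  have hsum : x / (1 - d) + (1 - x / (1 - d)) = 1 := by ring
  have hconc := strictConcaveOn_log_Ioi.concaveOn.2 hu h1 hl0 hl1 hsum
  simp only [smul_eq_mul, Real.log_one, mul_zero, add_zero, mul_one] at hconc
  have harg : x / (1 - d) * ((x + d) / x) + (1 - x / (1 - d)) = (1 - d)⁻¹ := by
    field_simp
    ring
  rw [harg, Real.log_inv] at hconc
  have hconc' : x * Real.log ((x + d) / x) ≤ negMulLog (1 - d) := by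
    have := mul_le_mul_of_nonneg_left hconc h1d.le
    rw [negMulLog]
    have hx' : (1 - d) * (x / (1 - d) * Real.log ((x + d) / x))
        = x * Real.log ((x + d) / x) := by field_simp
    nlinarith [this]
  have h2 : d * Real.log (x + d) ≤ 0 :=
    mul_nonpos_of_nonneg_of_nonpos hd.le (Real.log_nonpos (by linarith) hxd)
  have hsplit : -x * Real.log x + (x + d) * Real.log (x + d)
      = x * Real.log ((x + d) / x) + d * Real.log (x + d) := by
    rw [Real.log_div (by linarith) hx.ne']; ring
  simp only [negMulLog] at key2 hconc' ⊢
  linarith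

open Real in
private lemma pointwise_bound {x y : ℝ} (hx0 : 0 ≤ x) (hy0 : 0 ≤ y)
    (hx1 : x ≤ 1) (hy1 : y ≤ 1) (hxy : |x - y| ≤ 1 / 2) :
    |negMulLog x - negMulLog y| ≤ negMulLog |x - y| := by
  wlog hle : x ≤ y generalizing x y
  · have := this hy0 hx0 hy1 hx1 (by rwa [abs_sub_comm]) (le_of_not_ge hle)
    rwa [abs_sub_comm (negMulLog y), abs_sub_comm y] at this
  have habs : |x - y| = y - x := by rw [abs_sub_comm]; exact abs_of_nonneg (by linarith)
  rw [habs] at hxy ⊢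
  set d := y - x with hdd
  have hd0 : 0 ≤ d := by rw [hdd]; linarith
  have hyx : y = x + d := by rw [hdd]; ring
  rw [abs_le]
  constructor
  · have := negMulLog_add_le hx0 hd0
    rw [← hyx] at this
    linarith
  · rcases eq_or_lt_of_le hd0 with h0 | h0
    · have : y = x := by rw [hyx, ← h0]; ring
      simp [this, ← h0]
    · rcases eq_or_lt_of_le hx0 with hx' | hx'
      · have h1 : 0 ≤ negMulLog y := negMulLog_nonneg hy0 hy1
        have h2 : 0 ≤ negMulLog d := negMulLog_nonneg hd0 (by linarith)
        rw [← hx', negMulLog_zero]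
        linarith
      · have := negMulLog_sub_le hx' h0 (by rw [← hyx]; exact hy1) hxy
        rw [← hyx] at this
        linarith

open Real in
private lemma grouping_bound {A : Type*} [Fintype A] [Nonempty A] (r : A → ℝ)
    (hr : ∀ x, 0 ≤ r x) :
    ∑ x : A, negMulLog (r x)
      ≤ -(∑ x : A, r x) * Real.log ((∑ x : A, r x) / Fintype.card A) := by
  set n : ℝ := (Fintype.card A : ℝ) with hn
  have hnpos : 0 < n := by
    rw [hn]; exact_mod_cast Fintype.card_pos
  set R : ℝ := ∑ x : A, r x with hR
  have hJ := Real.concaveOn_negMulLog.le_map_sum (t := Finset.univ)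
    (w := fun _ : A => n⁻¹) (p := r)
    (fun i _ => by positivity)
    (by
      rw [Finset.sum_const, Finset.card_univ, nsmul_eq_mul]
      exact mul_inv_cancel₀ hnpos.ne')
    (fun i _ => hr i)
  simp only [smul_eq_mul] at hJ
  have hls : ∑ i : A, n⁻¹ * negMulLog (r i) = n⁻¹ * ∑ i : A, negMulLog (r i) := by
    rw [Finset.mul_sum]
  have hrs : ∑ i : A, n⁻¹ * r i = R / n := by
    rw [← Finset.mul_sum, ← hR]; ring
  rw [hls, hrs] at hJ
  have := mul_le_mul_of_nonneg_left hJ hnpos.le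
  rw [← mul_assoc, mul_inv_cancel₀ hnpos.ne', one_mul] at this
  calc ∑ x : A, negMulLog (r x) ≤ n * negMulLog (R / n) := this
    _ = -R * Real.log (R / n) := by
        rw [negMulLog]; field_simp

theorem stmt0 {A : Type*} [Fintype A] [DecidableEq A] [Nonempty A]
    (p q : A → ℝ) (hp0 : ∀ x, 0 ≤ p x) (hq0 : ∀ x, 0 ≤ q x)
    (hp1 : ∑ x : A, p x = 1) (hq1 : ∑ x : A, q x = 1)
    (h : L1 p q ≤ 1 / 2) :
    |entH p - entH q| ≤ -(L1 p q) * Real.logb 2 (L1 p q / (Fintype.card A)) := by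
  have hlog2 : 0 < Real.log 2 := Real.log_pos (by norm_num)
  have hent : ∀ f : A → ℝ, entH f = (∑ x : A, Real.negMulLog (f x)) / Real.log 2 := by
    intro f
    rw [entH]
    have : ∀ x : A, f x * Real.logb 2 (f x) = -(Real.negMulLog (f x) / Real.log 2) := by
      intro x; rw [Real.logb, Real.negMulLog]; field_simp
    rw [Finset.sum_congr rfl (fun x _ => this x)]
    rw [Finset.sum_neg_distrib, neg_neg, ← Finset.sum_div]
  have hRnn : 0 ≤ L1 p q := Finset.sum_nonneg (fun x _ => abs_nonneg _)
  rcases eq_or_lt_of_le hRnn with hR0 | hRpos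
  · -- L1 = 0, so p = q
    have hall : ∀ x ∈ Finset.univ, |p x - q x| = 0 :=
      (Finset.sum_eq_zero_iff_of_nonneg (fun x _ => abs_nonneg _)).mp hR0.symm
    have hpq : ∀ x : A, p x = q x := by
      intro x
      have := hall x (Finset.mem_univ x)
      rw [abs_eq_zero, sub_eq_zero] at this
      exact this
    have hent_eq : entH p = entH q := by
      rw [entH, entH]
      congr 1
      exact Finset.sum_congr rfl (fun x _ => by rw [hpq x])
    rw [hent_eq, sub_self, abs_zero, ← hR0]
    norm_num
  · have hub_p : ∀ x, p x ≤ 1 := fun x =>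
      hp1 ▸ Finset.single_le_sum (fun i _ => hp0 i) (Finset.mem_univ x)
    have hub_q : ∀ x, q x ≤ 1 := fun x =>
      hq1 ▸ Finset.single_le_sum (fun i _ => hq0 i) (Finset.mem_univ x)
    have hd_le : ∀ x : A, |p x - q x| ≤ 1 / 2 := by
      intro x
      refine le_trans ?_ h
      exact Finset.single_le_sum (fun i _ => abs_nonneg (p i - q i)) (Finset.mem_univ x)
    have hchain : |(∑ x : A, Real.negMulLog (p x)) - ∑ x : A, Real.negMulLog (q x)|
        ≤ -(L1 p q) * Real.log (L1 p q / Fintype.card A) := by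
      calc |(∑ x : A, Real.negMulLog (p x)) - ∑ x : A, Real.negMulLog (q x)|
          = |∑ x : A, (Real.negMulLog (p x) - Real.negMulLog (q x))| := by
            rw [Finset.sum_sub_distrib]
        _ ≤ ∑ x : A, |Real.negMulLog (p x) - Real.negMulLog (q x)| :=
            Finset.abs_sum_le_sum_abs _ _
        _ ≤ ∑ x : A, Real.negMulLog |p x - q x| :=
            Finset.sum_le_sum (fun x _ =>
              pointwise_bound (hp0 x) (hq0 x) (hub_p x) (hub_q x) (hd_le x))
        _ ≤ -(∑ x : A, |p x - q x|) * Real.log ((∑ x : A, |p x - q x|) / Fintype.card A) :=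
            grouping_bound (fun x => |p x - q x|) (fun x => abs_nonneg _)
        _ = -(L1 p q) * Real.log (L1 p q / Fintype.card A) := by rw [L1]
    rw [hent p, hent q, div_sub_div_same, abs_div, abs_of_pos hlog2]
    have hrhs : -(L1 p q) * Real.logb 2 (L1 p q / (Fintype.card A))
        = (-(L1 p q) * Real.log (L1 p q / Fintype.card A)) / Real.log 2 := by
      rw [Real.logb]; ring
    rw [hrhs]
    exact (div_le_div_iff_of_pos_right hlog2).mpr hchain
end

section
/- Let T be a string of length n over a finite alphabet A and let T⁻ be obtained from T by deleting the character c at some position. If p and p⁻ denote the empirical distributions of T and T⁻ (with n ≥ 2 and at least one character of T different from c), then the L1 distance satisfies 2/(n(n−1)) ≤ ||p − p⁻||₁ ≤ 2/n; in fact ||p − p⁻||₁ = 2(n − n_c)/(n(n−1)), where n_c is the number of occurrences of c in T. -/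
open Finset

noncomputable def empDist {A : Type*} [Fintype A] [DecidableEq A] (T : List A) : A → ℝ :=
  fun x => (T.count x : ℝ) / T.length

lemma sum_count_aux {A : Type*} [Fintype A] [DecidableEq A] (T : List A) :
    ∑ x : A, T.count x = T.length := by
  induction T with
  | nil => simp
  | cons a l ih => simp [List.count_cons, Finset.sum_add_distrib, ih]

theorem stmt4 {A : Type*} [Fintype A] [DecidableEq A]
    (T T₁ T₂ : List A) (c : A)
    (hT : T = T₁ ++ c :: T₂) (hn : 2 ≤ T.length)
    (hx : ∃ x ∈ T, x ≠ c) :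
    L1 (empDist T) (empDist (T₁ ++ T₂)) =
        2 * ((T.length : ℝ) - T.count c) / ((T.length : ℝ) * ((T.length : ℝ) - 1)) ∧
    2 / ((T.length : ℝ) * ((T.length : ℝ) - 1)) ≤ L1 (empDist T) (empDist (T₁ ++ T₂)) ∧
    L1 (empDist T) (empDist (T₁ ++ T₂)) ≤ 2 / (T.length : ℝ) := by
  set N : ℝ := (T.length : ℝ) with hN
  have hN2 : (2 : ℝ) ≤ N := by rw [hN]; exact_mod_cast hn
  have hNpos : (0 : ℝ) < N := by linarith
  have hN1pos : (0 : ℝ) < N - 1 := by linarith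
  have hlen : ((T₁ ++ T₂).length : ℝ) = N - 1 := by
    rw [hN, hT]; push_cast [List.length_append, List.length_cons]; ring
  have hcount : ∀ x : A, ((T₁ ++ T₂).count x : ℝ)
      = (T.count x : ℝ) - (if x = c then 1 else 0) := by
    intro x
    rw [hT]
    by_cases h : x = c <;>
      simp [List.count_append, List.count_cons, h] <;> push_cast <;> grind
  set nc : ℝ := (T.count c : ℝ) with hnc
  have hncle : nc ≤ N - 1 := by
    have h1 : T.count c ≠ T.length := by
      intro h
      obtain ⟨x, hxT, hxc⟩ := hx
      exact hxc ((List.count_eq_length.mp h) x hxT).symm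
    have h2 : T.count c < T.length := lt_of_le_of_ne (List.count_le_length) h1
    have h3 : T.count c + 1 ≤ T.length := h2
    have h4 : ((T.count c : ℝ)) + 1 ≤ (T.length : ℝ) := by exact_mod_cast h3
    rw [hnc, hN]; linarith
  have hnc1 : 1 ≤ nc := by
    have hc : c ∈ T := by rw [hT]; simp
    have : 1 ≤ T.count c := List.count_pos_iff.mpr hc
    rw [hnc]; exact_mod_cast this
  have hsum : ∑ x : A, (T.count x : ℝ) = N := by
    rw [hN]; exact_mod_cast sum_count_aux T
  have key : ∀ x : A, |empDist T x - empDist (T₁ ++ T₂) x|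
      = ((T.count x : ℝ) + (if x = c then N - 2 * nc else 0)) / (N * (N - 1)) := by
    intro x
    have hle : (T.count x : ℝ) ≤ N := by
      rw [hN]; exact_mod_cast (List.count_le_length (a := x) (l := T))
    simp only [empDist, hlen, hcount x, ← hN]
    by_cases h : x = c
    · rw [if_pos h, if_pos h, h, ← hnc]
      rw [h, ← hnc] at hle
      rw [abs_of_nonneg (by
        rw [div_sub_div _ _ (ne_of_gt hNpos) (ne_of_gt hN1pos)]
        apply div_nonneg _ (by positivity)
        nlinarith)]
      field_simp
      ring
    · rw [if_neg h, if_neg h, sub_zero, add_zero]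
      have h0 : (0:ℝ) ≤ (T.count x : ℝ) := by positivity
      rw [abs_of_nonpos (by
        rw [div_sub_div _ _ (ne_of_gt hNpos) (ne_of_gt hN1pos)]
        apply div_nonpos_of_nonpos_of_nonneg _ (by positivity)
        nlinarith)]
      field_simp
      ring
  have hL1 : L1 (empDist T) (empDist (T₁ ++ T₂)) = 2 * (N - nc) / (N * (N - 1)) := by
    unfold L1
    simp only [key]
    rw [← Finset.sum_div, Finset.sum_add_distrib, hsum,
      Finset.sum_ite_eq' Finset.univ c (fun _ => N - 2 * nc), if_pos (Finset.mem_univ c)]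
    ring
  refine ⟨hL1, ?_, ?_⟩
  · rw [hL1, div_le_div_iff₀ (by positivity) (by positivity)]
    nlinarith [mul_le_mul_of_nonneg_right (show (1:ℝ) ≤ N - nc by linarith)
      (le_of_lt (mul_pos hNpos hN1pos))]
  · rw [hL1, div_le_div_iff₀ (by positivity) (by positivity)]
    nlinarith
end

section
/- Let T = T₁ c T₂ and T′ = T₁ c′ T₂ be two strings differing in exactly one character position (where T₁, T₂ are strings and c, c′ are characters). For any k ≥ 1, among all contexts s ∈ A^k, the context-strings T^{(s)} and T′^{(s)} differ for at most 2k+1 distinct contexts s; for every other context s, T^{(s)} = T′^{(s)}. -/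
open Finset

def ctxStr {A : Type*} [DecidableEq A] (T s : List A) : List A :=
  ((List.range T.length).filter (fun i =>
      decide (s.length ≤ i ∧ (T.drop (i - s.length)).take s.length = s))).filterMap
    (fun i => T[i]?)

/-- Candidate windows: for `m ≤ k` the window of `T` ending before position `p + m`,
for `k < m` the window of `T'` ending before position `p + (m - k)`. -/
def gwin {A : Type*} (T T' : List A) (p k m : ℕ) : List A :=
  if m ≤ k then (T.drop (p + m - k)).take k else (T'.drop (p + (m - k) - k)).take k

lemma aux_main {A : Type*} [DecidableEq A]
    (T₁ T₂ : List A) (c c' : A) (k : ℕ) (S : List A) (hS : S.length = k)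
    (hs : ∀ m < 2 * k + 1, S ≠ gwin (T₁ ++ c :: T₂) (T₁ ++ c' :: T₂) T₁.length k m) :
    ctxStr (T₁ ++ c :: T₂) S = ctxStr (T₁ ++ c' :: T₂) S := by
  set p := T₁.length with hp
  set T := T₁ ++ c :: T₂ with hT
  set T' := T₁ ++ c' :: T₂ with hT'
  -- characters agree away from `p`
  have hchar : ∀ i : ℕ, i ≠ p → T[i]? = T'[i]? := by
    intro i hi
    rw [hT, hT', List.getElem?_append, List.getElem?_append]
    rcases lt_or_ge i p with h | h
    · simp [show i < T₁.length from h]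
    · have h' : p < i := lt_of_le_of_ne h (Ne.symm hi)
      have : ¬ i < T₁.length := by omega
      simp only [← hp, this, if_neg]
      have h1 : i - p ≠ 0 := by omega
      rcases Nat.exists_eq_succ_of_ne_zero h1 with ⟨j, hj⟩
      simp [hj]
  have hlen : T.length = T'.length := by simp [hT, hT']
  -- windows agree when they don't contain position `p`
  have hwin : ∀ d : ℕ, (d + k ≤ p ∨ p < d) → (T.drop d).take k = (T'.drop d).take k := by
    intro d hd
    apply List.ext_getElem?
    intro j
    rw [List.getElem?_take, List.getElem?_take]
    split
    · rename_i hjk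
      rw [List.getElem?_drop, List.getElem?_drop]
      exact hchar _ (by omega)
    · rfl
  -- the two filter predicates agree, and are false on [p, p+k]
  have hpred : ∀ i : ℕ,
      (decide (S.length ≤ i ∧ (T.drop (i - S.length)).take S.length = S)
        = decide (S.length ≤ i ∧ (T'.drop (i - S.length)).take S.length = S))
      ∧ ((S.length ≤ i ∧ (T.drop (i - S.length)).take S.length = S) → i ≠ p) := by
    intro i
    rw [hS]
    rcases lt_or_ge i k with hik | hik
    · constructor
      · simp only [decide_eq_decide]; omega
      · intro h; omega
    · -- k ≤ i
      rcases le_or_gt i p with h1 | h1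
      · -- i ≤ p : windows agree
        have hw : (T.drop (i - k)).take k = (T'.drop (i - k)).take k := by
          apply hwin; left; omega
        constructor
        · rw [hw]
        · rintro ⟨-, hEq⟩ hip
          -- then S = gwin ... 0
          apply hs 0 (by omega)
          rw [gwin, if_pos (Nat.zero_le k)]
          rw [← hEq, hip]
          congr 2
      · rcases le_or_gt i (p + k) with h2 | h2
        · -- p < i ≤ p + k : both predicates false
          have hfT : ¬ ((T.drop (i - k)).take k = S) := by
            intro hEq
            apply hs (i - p) (by omega)
            rw [gwin, if_pos (by omega : i - p ≤ k), ← hEq]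
            congr 2
            omega
          have hfT' : ¬ ((T'.drop (i - k)).take k = S) := by
            intro hEq
            apply hs (k + (i - p)) (by omega)
            rw [gwin, if_neg (by omega)]
            rw [← hEq]
            congr 2
            omega
          constructor
          · simp only [decide_eq_decide]
            constructor
            · rintro ⟨-, h⟩; exact absurd h hfT
            · rintro ⟨-, h⟩; exact absurd h hfT'
          · rintro ⟨-, h⟩; exact absurd h hfT
        · -- p + k < i : windows agree, i ≠ p
          have hw : (T.drop (i - k)).take k = (T'.drop (i - k)).take k := by
            apply hwin; right; omega
          constructor
          · rw [hw]
          · intro _; omega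
  unfold ctxStr
  rw [← hlen]
  rw [List.filter_congr (fun i _ => (hpred i).1)]
  apply List.filterMap_congr
  intro i hi
  rw [List.mem_filter] at hi
  have := of_decide_eq_true hi.2
  rw [← (hpred i).1] at hi
  have h2 := of_decide_eq_true hi.2
  exact hchar i ((hpred i).2 h2)

theorem stmt11 {A : Type*} [Fintype A] [DecidableEq A]
    (T₁ T₂ : List A) (c c' : A) (k : ℕ) (hk : 1 ≤ k) :
    (Finset.univ.filter (fun s : Fin k → A =>
        ctxStr (T₁ ++ c :: T₂) (List.ofFn s) ≠ ctxStr (T₁ ++ c' :: T₂) (List.ofFn s))).card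
      ≤ 2 * k + 1 := by
  classical
  set B := (Finset.univ.filter (fun s : Fin k → A =>
        ctxStr (T₁ ++ c :: T₂) (List.ofFn s) ≠ ctxStr (T₁ ++ c' :: T₂) (List.ofFn s))) with hB
  have hinj : Function.Injective (List.ofFn : (Fin k → A) → List A) := List.ofFn_injective
  have hsub : B.image List.ofFn ⊆
      (Finset.range (2 * k + 1)).image (gwin (T₁ ++ c :: T₂) (T₁ ++ c' :: T₂) T₁.length k) := by
    intro x hx
    rw [Finset.mem_image] at hx
    obtain ⟨s, hsB, rfl⟩ := hx
    rw [hB, Finset.mem_filter] at hsB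
    by_contra hcon
    apply hsB.2
    apply aux_main T₁ T₂ c c' k _ (by simp)
    intro m hm hEq
    apply hcon
    rw [Finset.mem_image]
    exact ⟨m, Finset.mem_range.mpr hm, hEq.symm⟩
  calc B.card = (B.image List.ofFn).card := (Finset.card_image_of_injective _ hinj).symm
    _ ≤ ((Finset.range (2 * k + 1)).image
          (gwin (T₁ ++ c :: T₂) (T₁ ++ c' :: T₂) T₁.length k)).card := Finset.card_le_card hsub
    _ ≤ (Finset.range (2 * k + 1)).card := Finset.card_image_le
    _ = 2 * k + 1 := Finset.card_range _
end

section
/- Consider the memory management scheme storing m variable-length binary strings (each of length at most b bits) in segments of b + 4p bits each (p = Θ(log(mb))), where all strings of the same length x are packed contiguously into the segments of a doubly-linked list L_x with at most one partially-filled segment per list. If s is the total length in bits of all stored strings, then the total number of segments used is at most s/b + b, and hence the total segment space is at most s(1 + 4p/b) + b(b + 4p) bits, which is s + O(b² + m log m) bits when b ≤ m, p = O(log m), and s ≤ bm. -/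
open Finset

theorem stmt16 : ∀ c₀ : ℝ, 0 < c₀ → ∃ C : ℝ, 0 < C ∧
    ∀ (b m p : ℕ) (sx : Fin b → ℕ), 0 < b → b ≤ m → 2 ≤ m →
      (p : ℝ) ≤ c₀ * Real.logb 2 m →
      (∑ x, sx x) ≤ b * m →
      ((∑ x, (sx x + b - 1) / b : ℕ) : ℝ) ≤ (∑ x, (sx x : ℝ)) / b + b ∧
      ((∑ x, (sx x + b - 1) / b : ℕ) : ℝ) * (b + 4 * p) ≤
        (∑ x, (sx x : ℝ)) * (1 + 4 * p / b) + b * (b + 4 * p) ∧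
      ((∑ x, (sx x + b - 1) / b : ℕ) : ℝ) * (b + 4 * p) ≤
        (∑ x, (sx x : ℝ)) + C * (b ^ 2 + m * Real.logb 2 m) := by
  intro c₀ hc₀
  refine ⟨8 * c₀ + 1, by positivity, ?_⟩
  intro b m p sx hb hbm hm hp hS
  have hb' : (0:ℝ) < b := by exact_mod_cast hb
  set S : ℝ := ∑ x, (sx x : ℝ) with hSdef
  have hS0 : 0 ≤ S := Finset.sum_nonneg fun x _ => by positivity
  have hSbm : S ≤ (b : ℝ) * m := by
    have : ((∑ x, sx x : ℕ) : ℝ) ≤ ((b * m : ℕ) : ℝ) := by exact_mod_cast hS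
    simpa [hSdef] using this
  have h1 : ((∑ x, (sx x + b - 1) / b : ℕ) : ℝ) ≤ S / b + b := by
    push_cast
    calc ∑ x, (((sx x + b - 1) / b : ℕ) : ℝ)
        ≤ ∑ x : Fin b, ((sx x : ℝ) / b + 1) := by
          apply Finset.sum_le_sum
          intro x _
          refine (Nat.cast_div_le).trans ?_
          rw [div_add' _ _ _ hb'.ne']
          apply div_le_div_of_nonneg_right _ hb'.le
          have : sx x + b - 1 ≤ sx x + b := Nat.sub_le _ _
          have := (Nat.cast_le (α := ℝ)).2 this
          push_cast at this ⊢
          linarith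
      _ = S / b + b := by
          rw [Finset.sum_add_distrib, ← Finset.sum_div]
          simp [hSdef]
  have hseg : (0:ℝ) ≤ (b : ℝ) + 4 * p := by positivity
  have h2 : ((∑ x, (sx x + b - 1) / b : ℕ) : ℝ) * (b + 4 * p) ≤
      S * (1 + 4 * p / b) + b * (b + 4 * p) := by
    have := mul_le_mul_of_nonneg_right h1 hseg
    refine this.trans_eq ?_
    field_simp
  refine ⟨h1, h2, ?_⟩
  -- part 3
  have hL : (1:ℝ) ≤ Real.logb 2 m := by
    have : Real.logb 2 2 ≤ Real.logb 2 m := by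
      exact Real.logb_le_logb_of_le (by norm_num) (by norm_num) (by exact_mod_cast hm)
    simpa using this
  have hm' : (0:ℝ) ≤ m := by positivity
  have hbm' : (b:ℝ) ≤ m := by exact_mod_cast hbm
  have hp0 : (0:ℝ) ≤ p := by positivity
  refine h2.trans ?_
  have key1 : S * (4 * (p:ℝ) / b) ≤ 4 * c₀ * (m * Real.logb 2 m) := by
    have h' : S / b ≤ m := by
      rw [div_le_iff₀ hb']
      linarith [hSbm]
    calc S * (4 * (p:ℝ) / b) = (S / b) * (4 * p) := by ring
      _ ≤ (m : ℝ) * (4 * (c₀ * Real.logb 2 m)) := by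
          apply mul_le_mul h' (by linarith) (by positivity) hm'
      _ = 4 * c₀ * (m * Real.logb 2 m) := by ring
  have key2 : (b:ℝ) * (4 * p) ≤ 4 * c₀ * (m * Real.logb 2 m) := by
    calc (b:ℝ) * (4 * p) ≤ (m : ℝ) * (4 * (c₀ * Real.logb 2 m)) := by
          apply mul_le_mul hbm' (by linarith) (by positivity) hm'
      _ = 4 * c₀ * (m * Real.logb 2 m) := by ring
  have hmL : (0:ℝ) ≤ (m:ℝ) * Real.logb 2 m := by positivity
  have expand : S * (1 + 4 * (p:ℝ) / b) + b * (b + 4 * p)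
      = S + S * (4 * p / b) + b * (4 * p) + (b:ℝ)^2 := by ring
  rw [expand]
  have hb2 : (0:ℝ) ≤ (b:ℝ)^2 := by positivity
  nlinarith [key1, key2, hmL, hb2, hc₀.le]
end
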